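/- arXiv:2407.08684 — 4 statements merged into one kernel-verified Lean document; each statement's English description precedes it below -/
import Mathlib

section
/- For any finite set D of cells of ℤ², there is at most one partition of D into 2×2 blocks: if T and T' are both partitions of D into 2×2 blocks, then T = T'. -/
/-- A 2×2 block of four cells of ℤ². -/
def IsBlock22 (S : Set (ℤ × ℤ)) : Prop :=
  ∃ x y : ℤ, S = {(x, y), (x + 1, y), (x, y + 1), (x + 1, y + 1)}

/-- A partition of `D ⊆ ℤ²` into 2×2 blocks. -/
def IsBlockPartition (D : Set (ℤ × ℤ)) (T : Set (Set (ℤ × ℤ))) : Prop :=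
  (∀ S ∈ T, IsBlock22 S) ∧
  (∀ S ∈ T, ∀ S' ∈ T, S ≠ S' → Disjoint S S') ∧
  ⋃₀ T = D

/-- The block with bottom-left corner `p`. -/
def Blk (p : ℤ × ℤ) : Set (ℤ × ℤ) :=
  {(p.1, p.2), (p.1 + 1, p.2), (p.1, p.2 + 1), (p.1 + 1, p.2 + 1)}

lemma blk_of_min {D S : Set (ℤ × ℤ)} {p : ℤ × ℤ}
    (hS : IsBlock22 S) (hp : p ∈ S) (hSD : S ⊆ D)
    (hmin1 : ∀ q ∈ D, p.1 ≤ q.1)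
    (hmin2 : ∀ q ∈ D, q.1 = p.1 → p.2 ≤ q.2) :
    S = Blk p := by
  obtain ⟨x, y, rfl⟩ := hS
  have hxy : ((x, y) : ℤ × ℤ) ∈ D := hSD (by simp)
  have hx : p.1 ≤ x := hmin1 _ hxy
  have hpeq : p = (x, y) := by
    simp only [Set.mem_insert_iff, Set.mem_singleton_iff] at hp
    rcases hp with h | h | h | h
    · exact h
    · exfalso; rw [h] at hx; simp at hx
    · exfalso
      have : p.1 = x := by rw [h]
      have hy := hmin2 _ hxy (by omega)
      rw [h] at hy; simp at hy
    · exfalso; rw [h] at hx; simp at hx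
  subst hpeq
  rfl

lemma empty_part {T : Set (Set (ℤ × ℤ))} (hT : IsBlockPartition ∅ T) : T = ∅ := by
  ext S
  simp only [Set.mem_empty_iff_false, iff_false]
  intro hS
  obtain ⟨x, y, rfl⟩ := hT.1 S hS
  have : ((x, y) : ℤ × ℤ) ∈ ⋃₀ T := ⟨_, hS, by simp⟩
  rw [hT.2.2] at this
  exact this

theorem unique_block_partition (D : Set (ℤ × ℤ)) (hD : D.Finite)
    (T T' : Set (Set (ℤ × ℤ)))
    (hT : IsBlockPartition D T) (hT' : IsBlockPartition D T') :
    T = T' := by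
  have key : ∀ n : ℕ, ∀ D : Set (ℤ × ℤ), ∀ hD : D.Finite, hD.toFinset.card ≤ n →
      ∀ T T' : Set (Set (ℤ × ℤ)), IsBlockPartition D T → IsBlockPartition D T' →
      T = T' := by
    intro n
    induction n with
    | zero =>
      intro D hD hcard T T' hT hT'
      have hDe : D = ∅ := by
        have := Finset.card_eq_zero.mp (Nat.le_zero.mp hcard)
        rw [← hD.coe_toFinset, this]; simp
      subst hDe
      rw [empty_part hT, empty_part hT']
    | succ n ih =>
      intro D hD hcard T T' hT hT'
      by_cases hDe : D = ∅
      · subst hDe; rw [empty_part hT, empty_part hT']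
      · -- find the lex-minimal cell p of D
        have hne : D.Nonempty := Set.nonempty_iff_ne_empty.mpr hDe
        have hFne : hD.toFinset.Nonempty := by
          rwa [Set.Finite.toFinset_nonempty]
        set F := hD.toFinset with hF
        set X := (F.image Prod.fst).min' (hFne.image _) with hX
        have hXmem : X ∈ F.image Prod.fst := Finset.min'_mem _ _
        obtain ⟨q0, hq0F, hq0X⟩ := Finset.mem_image.mp hXmem
        set F2 := F.filter (fun q => q.1 = X) with hF2
        have hF2ne : F2.Nonempty := ⟨q0, Finset.mem_filter.mpr ⟨hq0F, hq0X⟩⟩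
        set Y := (F2.image Prod.snd).min' (hF2ne.image _) with hY
        have hYmem : Y ∈ F2.image Prod.snd := Finset.min'_mem _ _
        obtain ⟨q1, hq1F2, hq1Y⟩ := Finset.mem_image.mp hYmem
        have hq1 : q1 = (X, Y) := by
          have := (Finset.mem_filter.mp hq1F2).2
          exact Prod.ext this hq1Y
        have hpD : ((X, Y) : ℤ × ℤ) ∈ D := by
          rw [← hq1]
          exact hD.mem_toFinset.mp (Finset.mem_filter.mp hq1F2).1
        set p : ℤ × ℤ := (X, Y) with hp
        have hmin1 : ∀ q ∈ D, p.1 ≤ q.1 := by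
          intro q hq
          exact Finset.min'_le _ _ (Finset.mem_image_of_mem _ (hD.mem_toFinset.mpr hq))
        have hmin2 : ∀ q ∈ D, q.1 = p.1 → p.2 ≤ q.2 := by
          intro q hq hq1
          exact Finset.min'_le _ _ (Finset.mem_image_of_mem _
            (Finset.mem_filter.mpr ⟨hD.mem_toFinset.mpr hq, hq1⟩))
        -- the unique block containing p is Blk p, in both T and T'
        have hB : ∀ U : Set (Set (ℤ × ℤ)), IsBlockPartition D U → Blk p ∈ U := by
          intro U hU
          have : p ∈ ⋃₀ U := by rw [hU.2.2]; exact hpD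
          obtain ⟨S, hSU, hpS⟩ := this
          have hSD : S ⊆ D := by rw [← hU.2.2]; exact Set.subset_sUnion_of_mem hSU
          have := blk_of_min (hU.1 S hSU) hpS hSD hmin1 hmin2
          rwa [← this]
        have hBT : Blk p ∈ T := hB T hT
        have hBT' : Blk p ∈ T' := hB T' hT'
        -- peel off the block
        set B := Blk p with hBdef
        set D' := D \ B with hD'
        have hD'fin : D'.Finite := hD.subset Set.diff_subset
        have hpart : ∀ U : Set (Set (ℤ × ℤ)), IsBlockPartition D U → B ∈ U →
            IsBlockPartition D' (U \ {B}) := by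
          intro U hU hBU
          refine ⟨fun S hS => hU.1 S hS.1, fun S hS S' hS' hne => hU.2.1 S hS.1 S' hS'.1 hne, ?_⟩
          ext q
          constructor
          · rintro ⟨S, ⟨hSU, hSne⟩, hqS⟩
            refine ⟨?_, ?_⟩
            · rw [← hU.2.2]; exact ⟨S, hSU, hqS⟩
            · intro hqB
              have hdisj := hU.2.1 S hSU B hBU (by simpa using hSne)
              exact (Set.disjoint_left.mp hdisj hqS) hqB
          · rintro ⟨hqD, hqB⟩
            rw [← hU.2.2] at hqD
            obtain ⟨S, hSU, hqS⟩ := hqD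
            have : S ≠ B := fun h => hqB (h ▸ hqS)
            exact ⟨S, ⟨hSU, by simpa using this⟩, hqS⟩
        have hcard' : hD'fin.toFinset.card ≤ n := by
          have hlt : hD'fin.toFinset.card < hD.toFinset.card := by
            apply Finset.card_lt_card
            constructor
            · intro q hq
              rw [Set.Finite.mem_toFinset] at hq ⊢
              exact hq.1
            · intro hsub
              have := hsub (hD.mem_toFinset.mpr hpD)
              rw [Set.Finite.mem_toFinset] at this
              exact this.2 (by simp [hBdef, Blk])
          rw [← hF] at hlt
          omega
        have heq := ih D' hD'fin hcard' _ _ (hpart T hT hBT) (hpart T' hT' hBT')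
        calc T = insert B (T \ {B}) := by
                rw [Set.insert_diff_singleton, Set.insert_eq_self.mpr hBT]
          _ = insert B (T' \ {B}) := by rw [heq]
          _ = T' := by rw [Set.insert_diff_singleton, Set.insert_eq_self.mpr hBT']
  exact key hD.toFinset.card D hD le_rfl T T' hT hT'
end

section
/- Let L, M, N be integers with min{L,M,N} ≥ 2 and let R be the L×M×N box of cells. If c : R → (ℤ/2ℤ)² is a coloring such that for every slab S contained in R the restriction of c to S is injective (each slab contained in R covers exactly one cell of each of the four colors), then there is a permutation σ of (ℤ/2ℤ)² such that c(x,y,z) = σ(φ(x,y,z)) for all (x,y,z) ∈ R, where φ(x,y,z) = (y+z, x+z) (mod 2). In other words, up to permutation of the colors, the box admits only one slab-type coloring. -/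
/-- A slab: an axis-aligned 2×2×1 block of four cells of ℤ³. -/
def IsSlab (S : Set (ℤ × ℤ × ℤ)) : Prop :=
  (∃ x y z : ℤ, S = {(x, y, z), (x + 1, y, z), (x, y + 1, z), (x + 1, y + 1, z)}) ∨
  (∃ x y z : ℤ, S = {(x, y, z), (x + 1, y, z), (x, y, z + 1), (x + 1, y, z + 1)}) ∨
  (∃ x y z : ℤ, S = {(x, y, z), (x, y + 1, z), (x, y, z + 1), (x, y + 1, z + 1)})

/-- A slab tiling of a region `R ⊆ ℤ³`: a partition of `R` into slabs. -/
def IsSlabTiling (R : Set (ℤ × ℤ × ℤ)) (t : Set (Set (ℤ × ℤ × ℤ))) : Prop :=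
  (∀ S ∈ t, IsSlab S) ∧
  (∀ S ∈ t, ∀ S' ∈ t, S ≠ S' → Disjoint S S') ∧
  ⋃₀ t = R

/-- A 2×2×2 block of eight cells of ℤ³. -/
def IsBlock222 (B : Set (ℤ × ℤ × ℤ)) : Prop :=
  ∃ x y z : ℤ, B = {(x, y, z), (x + 1, y, z), (x, y + 1, z), (x + 1, y + 1, z),
    (x, y, z + 1), (x + 1, y, z + 1), (x, y + 1, z + 1), (x + 1, y + 1, z + 1)}

/-- Two tilings differ by a flip. -/
def Flip (t t' : Set (Set (ℤ × ℤ × ℤ))) : Prop :=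
  ∃ P₁ P₂ P₁' P₂' : Set (ℤ × ℤ × ℤ),
    P₁ ∈ t ∧ P₂ ∈ t ∧ P₁' ∈ t' ∧ P₂' ∈ t' ∧
    t \ {P₁, P₂} = t' \ {P₁', P₂'} ∧
    P₁ ∪ P₂ = P₁' ∪ P₂' ∧ IsBlock222 (P₁ ∪ P₂)

/-- The L×M×N box of cells {0,…,L−1}×{0,…,M−1}×{0,…,N−1}. -/
def Box (L M N : ℤ) : Set (ℤ × ℤ × ℤ) :=
  {p | 0 ≤ p.1 ∧ p.1 < L ∧ 0 ≤ p.2.1 ∧ p.2.1 < M ∧ 0 ≤ p.2.2 ∧ p.2.2 < N}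

/-- The coloring φ(x,y,z) = (y+z, x+z) mod 2. -/
def slabColoring (p : ℤ × ℤ × ℤ) : ZMod 2 × ZMod 2 :=
  (((p.2.1 + p.2.2 : ℤ) : ZMod 2), ((p.1 + p.2.2 : ℤ) : ZMod 2))

set_option synthInstance.maxSize 2000 in
set_option maxHeartbeats 2000000 in
lemma four_resolve : ∀ a b c d x : ZMod 2 × ZMod 2, a ≠ b → a ≠ c → a ≠ d → b ≠ c → b ≠ d → c ≠ d → x ≠ b → x ≠ c → x ≠ d → x = a := by decide

lemma cube_eq (L M N : ℤ) (c : ℤ × ℤ × ℤ → ZMod 2 × ZMod 2)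
    (hc : ∀ S : Set (ℤ × ℤ × ℤ), IsSlab S → S ⊆ Box L M N → Set.InjOn c S)
    (x y z : ℤ) (hx0 : 0 ≤ x) (hx1 : x + 1 < L) (hy0 : 0 ≤ y) (hy1 : y + 1 < M)
    (hz0 : 0 ≤ z) (hz1 : z + 1 < N) :
    c (x, y, z) = c (x+1, y+1, z+1) ∧ c (x+1, y, z) = c (x, y+1, z+1) ∧
    c (x, y+1, z) = c (x+1, y, z+1) ∧ c (x+1, y+1, z) = c (x, y, z+1) := by
  have hsub : ∀ a b d : ℤ, x ≤ a → a ≤ x + 1 → y ≤ b → b ≤ y + 1 → z ≤ d → d ≤ z + 1 →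
      ((a, b, d) : ℤ × ℤ × ℤ) ∈ Box L M N := fun a b d h1 h2 h3 h4 h5 h6 =>
    show 0 ≤ a ∧ a < L ∧ 0 ≤ b ∧ b < M ∧ 0 ≤ d ∧ d < N by omega
  have hB := hc _ (Or.inl ⟨x, y, z, rfl⟩) (by
    rintro p hp
    simp only [Set.mem_insert_iff, Set.mem_singleton_iff] at hp
    rcases hp with rfl | rfl | rfl | rfl <;>
      exact hsub _ _ _ (by omega) (by omega) (by omega) (by omega) (by omega) (by omega))
  have hT := hc _ (Or.inl ⟨x, y, z + 1, rfl⟩) (by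
    rintro p hp
    simp only [Set.mem_insert_iff, Set.mem_singleton_iff] at hp
    rcases hp with rfl | rfl | rfl | rfl <;>
      exact hsub _ _ _ (by omega) (by omega) (by omega) (by omega) (by omega) (by omega))
  have hY0 := hc _ (Or.inr (Or.inl ⟨x, y, z, rfl⟩)) (by
    rintro p hp
    simp only [Set.mem_insert_iff, Set.mem_singleton_iff] at hp
    rcases hp with rfl | rfl | rfl | rfl <;>
      exact hsub _ _ _ (by omega) (by omega) (by omega) (by omega) (by omega) (by omega))
  have hY1 := hc _ (Or.inr (Or.inl ⟨x, y + 1, z, rfl⟩)) (by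
    rintro p hp
    simp only [Set.mem_insert_iff, Set.mem_singleton_iff] at hp
    rcases hp with rfl | rfl | rfl | rfl <;>
      exact hsub _ _ _ (by omega) (by omega) (by omega) (by omega) (by omega) (by omega))
  have hX0 := hc _ (Or.inr (Or.inr ⟨x, y, z, rfl⟩)) (by
    rintro p hp
    simp only [Set.mem_insert_iff, Set.mem_singleton_iff] at hp
    rcases hp with rfl | rfl | rfl | rfl <;>
      exact hsub _ _ _ (by omega) (by omega) (by omega) (by omega) (by omega) (by omega))
  have hX1 := hc _ (Or.inr (Or.inr ⟨x + 1, y, z, rfl⟩)) (by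
    rintro p hp
    simp only [Set.mem_insert_iff, Set.mem_singleton_iff] at hp
    rcases hp with rfl | rfl | rfl | rfl <;>
      exact hsub _ _ _ (by omega) (by omega) (by omega) (by omega) (by omega) (by omega))
  have ne : ∀ (S : Set (ℤ × ℤ × ℤ)), Set.InjOn c S → ∀ p q : ℤ × ℤ × ℤ, p ∈ S → q ∈ S → p ≠ q →
      c p ≠ c q := fun S hS p q hp hq hne h => hne (hS hp hq h)
  have b1 := ne _ hB (x,y,z) (x+1,y,z) (by simp) (by simp) (by simp [Prod.ext_iff] <;> omega)
  have b2 := ne _ hB (x,y,z) (x,y+1,z) (by simp) (by simp) (by simp [Prod.ext_iff] <;> omega)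
  have b3 := ne _ hB (x,y,z) (x+1,y+1,z) (by simp) (by simp) (by simp [Prod.ext_iff] <;> omega)
  have b4 := ne _ hB (x+1,y,z) (x,y+1,z) (by simp) (by simp) (by simp [Prod.ext_iff] <;> omega)
  have b5 := ne _ hB (x+1,y,z) (x+1,y+1,z) (by simp) (by simp) (by simp [Prod.ext_iff] <;> omega)
  have b6 := ne _ hB (x,y+1,z) (x+1,y+1,z) (by simp) (by simp) (by simp [Prod.ext_iff] <;> omega)
  have t1 := ne _ hT (x,y,z+1) (x+1,y,z+1) (by simp) (by simp) (by simp [Prod.ext_iff] <;> omega)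
  have t2 := ne _ hT (x,y,z+1) (x,y+1,z+1) (by simp) (by simp) (by simp [Prod.ext_iff] <;> omega)
  have t3 := ne _ hT (x,y,z+1) (x+1,y+1,z+1) (by simp) (by simp) (by simp [Prod.ext_iff] <;> omega)
  have t4 := ne _ hT (x+1,y,z+1) (x,y+1,z+1) (by simp) (by simp) (by simp [Prod.ext_iff] <;> omega)
  have t5 := ne _ hT (x+1,y,z+1) (x+1,y+1,z+1) (by simp) (by simp) (by simp [Prod.ext_iff] <;> omega)
  have t6 := ne _ hT (x,y+1,z+1) (x+1,y+1,z+1) (by simp) (by simp) (by simp [Prod.ext_iff] <;> omega)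
  have r1 := ne _ hX1 (x+1,y+1,z+1) (x+1,y,z) (by simp) (by simp) (by simp [Prod.ext_iff] <;> omega)
  have r2 := ne _ hX1 (x+1,y+1,z) (x+1,y,z+1) (by simp) (by simp) (by simp [Prod.ext_iff] <;> omega)
  have r3 := ne _ hX1 (x+1,y+1,z) (x+1,y+1,z+1) (by simp) (by simp) (by simp [Prod.ext_iff] <;> omega)
  have r4 := ne _ hX1 (x+1,y,z) (x+1,y+1,z+1) (by simp) (by simp) (by simp [Prod.ext_iff] <;> omega)
  have s1 := ne _ hY1 (x+1,y+1,z+1) (x,y+1,z) (by simp) (by simp) (by simp [Prod.ext_iff] <;> omega)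
  have s2 := ne _ hY1 (x+1,y+1,z) (x,y+1,z+1) (by simp) (by simp) (by simp [Prod.ext_iff] <;> omega)
  have s4 := ne _ hY1 (x,y+1,z) (x+1,y+1,z+1) (by simp) (by simp) (by simp [Prod.ext_iff] <;> omega)
  have u1 := ne _ hY0 (x+1,y,z) (x,y,z+1) (by simp) (by simp) (by simp [Prod.ext_iff] <;> omega)
  have u2 := ne _ hY0 (x+1,y,z) (x+1,y,z+1) (by simp) (by simp) (by simp [Prod.ext_iff] <;> omega)
  have v1 := ne _ hX0 (x,y+1,z) (x,y,z+1) (by simp) (by simp) (by simp [Prod.ext_iff] <;> omega)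
  have v2 := ne _ hX0 (x,y+1,z) (x,y+1,z+1) (by simp) (by simp) (by simp [Prod.ext_iff] <;> omega)
  refine ⟨?_, ?_, ?_, ?_⟩
  · exact (four_resolve (c (x,y,z)) (c (x+1,y,z)) (c (x,y+1,z)) (c (x+1,y+1,z)) (c (x+1,y+1,z+1))
      b1 b2 b3 b4 b5 b6 r1 s1 r3.symm).symm
  · exact four_resolve (c (x,y+1,z+1)) (c (x,y,z+1)) (c (x+1,y,z+1)) (c (x+1,y+1,z+1)) (c (x+1,y,z))
      t2.symm t4.symm t6 t1 t3 t5 u1 u2 r4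
  · exact four_resolve (c (x+1,y,z+1)) (c (x,y,z+1)) (c (x,y+1,z+1)) (c (x+1,y+1,z+1)) (c (x,y+1,z))
      t1.symm t4 t5 t2 t3 t6 v1 v2 s4
  · exact four_resolve (c (x,y,z+1)) (c (x+1,y,z+1)) (c (x,y+1,z+1)) (c (x+1,y+1,z+1)) (c (x+1,y+1,z))
      t1 t2 t3 t4 t5 t6 r2 s2 r3

lemma move (L M N : ℤ) (c : ℤ × ℤ × ℤ → ZMod 2 × ZMod 2)
    (hc : ∀ S : Set (ℤ × ℤ × ℤ), IsSlab S → S ⊆ Box L M N → Set.InjOn c S)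
    (x y z e1 e2 e3 : ℤ) (he1 : e1 = 1 ∨ e1 = -1) (he2 : e2 = 1 ∨ e2 = -1)
    (he3 : e3 = 1 ∨ e3 = -1) (hp : (x, y, z) ∈ Box L M N)
    (hq : (x + e1, y + e2, z + e3) ∈ Box L M N) :
    c (x, y, z) = c (x + e1, y + e2, z + e3) := by
  obtain ⟨p1, p2, p3, p4, p5, p6⟩ : 0 ≤ x ∧ x < L ∧ 0 ≤ y ∧ y < M ∧ 0 ≤ z ∧ z < N := hp
  obtain ⟨q1, q2, q3, q4, q5, q6⟩ : 0 ≤ x + e1 ∧ x + e1 < L ∧ 0 ≤ y + e2 ∧ y + e2 < M ∧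
    0 ≤ z + e3 ∧ z + e3 < N := hq
  have ceq : ∀ a1 a2 a3 b1 b2 b3 : ℤ, a1 = b1 → a2 = b2 → a3 = b3 →
      c (a1, a2, a3) = c (b1, b2, b3) := by rintro a1 a2 a3 _ _ _ rfl rfl rfl; rfl
  rcases he1 with rfl | rfl <;> rcases he2 with rfl | rfl <;> rcases he3 with rfl | rfl
  · exact (cube_eq L M N c hc x y z (by omega) (by omega) (by omega) (by omega) (by omega) (by omega)).1
  · have h := (cube_eq L M N c hc x y (z-1) (by omega) (by omega) (by omega) (by omega) (by omega) (by omega)).2.2.2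
    exact (ceq _ _ _ _ _ _ (by ring) (by ring) (by ring)).trans (h.symm.trans (ceq _ _ _ _ _ _ (by ring) (by ring) (by ring)))
  · have h := (cube_eq L M N c hc x (y-1) z (by omega) (by omega) (by omega) (by omega) (by omega) (by omega)).2.2.1
    exact (ceq _ _ _ _ _ _ (by ring) (by ring) (by ring)).trans (h.trans (ceq _ _ _ _ _ _ (by ring) (by ring) (by ring)))
  · have h := (cube_eq L M N c hc x (y-1) (z-1) (by omega) (by omega) (by omega) (by omega) (by omega) (by omega)).2.1
    exact (ceq _ _ _ _ _ _ (by ring) (by ring) (by ring)).trans (h.symm.trans (ceq _ _ _ _ _ _ (by ring) (by ring) (by ring)))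
  · have h := (cube_eq L M N c hc (x-1) y z (by omega) (by omega) (by omega) (by omega) (by omega) (by omega)).2.1
    exact (ceq _ _ _ _ _ _ (by ring) (by ring) (by ring)).trans (h.trans (ceq _ _ _ _ _ _ (by ring) (by ring) (by ring)))
  · have h := (cube_eq L M N c hc (x-1) y (z-1) (by omega) (by omega) (by omega) (by omega) (by omega) (by omega)).2.2.1
    exact (ceq _ _ _ _ _ _ (by ring) (by ring) (by ring)).trans (h.symm.trans (ceq _ _ _ _ _ _ (by ring) (by ring) (by ring)))
  · have h := (cube_eq L M N c hc (x-1) (y-1) z (by omega) (by omega) (by omega) (by omega) (by omega) (by omega)).2.2.2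
    exact (ceq _ _ _ _ _ _ (by ring) (by ring) (by ring)).trans (h.trans (ceq _ _ _ _ _ _ (by ring) (by ring) (by ring)))
  · have h := (cube_eq L M N c hc (x-1) (y-1) (z-1) (by omega) (by omega) (by omega) (by omega) (by omega) (by omega)).1
    exact (ceq _ _ _ _ _ _ (by ring) (by ring) (by ring)).trans (h.symm.trans (ceq _ _ _ _ _ _ (by ring) (by ring) (by ring)))

lemma reduce (L M N : ℤ) (hL : 2 ≤ L) (hM : 2 ≤ M) (hN : 2 ≤ N)
    (c : ℤ × ℤ × ℤ → ZMod 2 × ZMod 2)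
    (hc : ∀ S : Set (ℤ × ℤ × ℤ), IsSlab S → S ⊆ Box L M N → Set.InjOn c S) :
    ∀ n : ℕ, ∀ x y z : ℤ, (3 * z + x + y).toNat = n → (x, y, z) ∈ Box L M N →
      c (x, y, z) = c ((x + z) % 2, (y + z) % 2, 0) := by
  have mem : ∀ a b d : ℤ, 0 ≤ a → a < L → 0 ≤ b → b < M → 0 ≤ d → d < N →
      ((a, b, d) : ℤ × ℤ × ℤ) ∈ Box L M N := fun a b d h1 h2 h3 h4 h5 h6 =>
    ⟨h1, h2, h3, h4, h5, h6⟩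
  have ceq : ∀ a1 a2 a3 b1 b2 b3 : ℤ, a1 = b1 → a2 = b2 → a3 = b3 →
      c (a1, a2, a3) = c (b1, b2, b3) := by rintro a1 a2 a3 _ _ _ rfl rfl rfl; rfl
  intro n
  induction n using Nat.strong_induction_on with
  | _ n ih =>
    intro x y z hn hmem
    obtain ⟨h1, h2, h3, h4, h5, h6⟩ : 0 ≤ x ∧ x < L ∧ 0 ≤ y ∧ y < M ∧ 0 ≤ z ∧ z < N := hmem
    by_cases hz : 1 ≤ z
    · -- pick e1, e2
      obtain ⟨e1, he1, hx⟩ : ∃ e1 : ℤ, (e1 = 1 ∨ e1 = -1) ∧ 0 ≤ x + e1 ∧ x + e1 < L := by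
        by_cases h : x + 1 < L
        · exact ⟨1, Or.inl rfl, by omega⟩
        · exact ⟨-1, Or.inr rfl, by omega⟩
      obtain ⟨e2, he2, hy⟩ : ∃ e2 : ℤ, (e2 = 1 ∨ e2 = -1) ∧ 0 ≤ y + e2 ∧ y + e2 < M := by
        by_cases h : y + 1 < M
        · exact ⟨1, Or.inl rfl, by omega⟩
        · exact ⟨-1, Or.inr rfl, by omega⟩
      have step := move L M N c hc x y z e1 e2 (-1) he1 he2 (Or.inr rfl) (mem _ _ _ h1 h2 h3 h4 h5 h6)
        (mem _ _ _ hx.1 hx.2 hy.1 hy.2 (by omega) (by omega))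
      rw [step, ih (3 * (z + -1) + (x + e1) + (y + e2)).toNat
        (by rcases he1 with rfl | rfl <;> rcases he2 with rfl | rfl <;> omega)
        (x + e1) (y + e2) (z + -1) rfl (mem _ _ _ hx.1 hx.2 hy.1 hy.2 (by omega) (by omega))]
      exact ceq _ _ _ _ _ _ (by rcases he1 with rfl | rfl <;> omega)
        (by rcases he2 with rfl | rfl <;> omega) rfl
    · have hz0 : z = 0 := by omega
      subst hz0
      by_cases hx2 : 2 ≤ x
      · obtain ⟨e2, he2, hy⟩ : ∃ e2 : ℤ, (e2 = 1 ∨ e2 = -1) ∧ 0 ≤ y + e2 ∧ y + e2 < M := by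
          by_cases h : y + 1 < M
          · exact ⟨1, Or.inl rfl, by omega⟩
          · exact ⟨-1, Or.inr rfl, by omega⟩
        have m1 : ((x + -1, y + e2, (0:ℤ) + 1) : ℤ × ℤ × ℤ) ∈ Box L M N :=
          mem _ _ _ (by omega) (by omega) hy.1 hy.2 (by omega) (by omega)
        have step1 := move L M N c hc x y 0 (-1) e2 1 (Or.inr rfl) he2 (Or.inl rfl) (mem _ _ _ h1 h2 h3 h4 h5 h6) m1
        have m2 : ((x + -1 + -1, y + e2 + -e2, (0:ℤ) + 1 + -1) : ℤ × ℤ × ℤ) ∈ Box L M N := by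
          refine mem _ _ _ (by omega) (by omega) (by omega) (by omega) (by omega) (by omega)
        have step2 := move L M N c hc (x + -1) (y + e2) ((0:ℤ) + 1) (-1) (-e2) (-1)
          (Or.inr rfl) (by rcases he2 with rfl | rfl <;> omega) (Or.inr rfl) m1 m2
        rw [step1, step2, ceq (x + -1 + -1) (y + e2 + -e2) ((0:ℤ) + 1 + -1) (x - 2) y 0
          (by ring) (by ring) (by ring),
          ih (3 * 0 + (x - 2) + y).toNat (by omega) (x - 2) y 0 rfl
          (mem _ _ _ (by omega) (by omega) h3 h4 (by omega) (by omega))]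
        exact ceq _ _ _ _ _ _ (by omega) (by omega) rfl
      · by_cases hy2 : 2 ≤ y
        · obtain ⟨e1, he1, hx⟩ : ∃ e1 : ℤ, (e1 = 1 ∨ e1 = -1) ∧ 0 ≤ x + e1 ∧ x + e1 < L := by
            by_cases h : x + 1 < L
            · exact ⟨1, Or.inl rfl, by omega⟩
            · exact ⟨-1, Or.inr rfl, by omega⟩
          have m1 : ((x + e1, y + -1, (0:ℤ) + 1) : ℤ × ℤ × ℤ) ∈ Box L M N :=
            mem _ _ _ hx.1 hx.2 (by omega) (by omega) (by omega) (by omega)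
          have step1 := move L M N c hc x y 0 e1 (-1) 1 he1 (Or.inr rfl) (Or.inl rfl) (mem _ _ _ h1 h2 h3 h4 h5 h6) m1
          have m2 : ((x + e1 + -e1, y + -1 + -1, (0:ℤ) + 1 + -1) : ℤ × ℤ × ℤ) ∈ Box L M N := by
            refine mem _ _ _ (by omega) (by omega) (by omega) (by omega) (by omega) (by omega)
          have step2 := move L M N c hc (x + e1) (y + -1) ((0:ℤ) + 1) (-e1) (-1) (-1)
            (by rcases he1 with rfl | rfl <;> omega) (Or.inr rfl) (Or.inr rfl) m1 m2
          rw [step1, step2, ceq (x + e1 + -e1) (y + -1 + -1) ((0:ℤ) + 1 + -1) x (y - 2) 0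
            (by ring) (by ring) (by ring),
            ih (3 * 0 + x + (y - 2)).toNat (by omega) x (y - 2) 0 rfl
            (mem _ _ _ h1 h2 (by omega) (by omega) (by omega) (by omega))]
          exact ceq _ _ _ _ _ _ (by omega) (by omega) rfl
        · exact ceq _ _ _ _ _ _ (by omega) (by omega) rfl

theorem slab_type_coloring_unique (L M N : ℤ) (hL : 2 ≤ L) (hM : 2 ≤ M) (hN : 2 ≤ N)
    (c : ℤ × ℤ × ℤ → ZMod 2 × ZMod 2)
    (hc : ∀ S : Set (ℤ × ℤ × ℤ), IsSlab S → S ⊆ Box L M N → Set.InjOn c S) :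
    ∃ σ : Equiv.Perm (ZMod 2 × ZMod 2),
      ∀ p ∈ Box L M N, c p = σ (slabColoring p) := by
  have hS0 : Set.InjOn c {((0:ℤ), (0:ℤ), (0:ℤ)), (0 + 1, 0, 0), (0, 0 + 1, 0), (0 + 1, 0 + 1, 0)} := by
    refine hc _ (Or.inl ⟨0, 0, 0, rfl⟩) ?_
    rintro p hp
    simp only [Set.mem_insert_iff, Set.mem_singleton_iff] at hp
    rcases hp with rfl | rfl | rfl | rfl <;>
      exact show (0:ℤ) ≤ _ ∧ _ < L ∧ (0:ℤ) ≤ _ ∧ _ < M ∧ (0:ℤ) ≤ _ ∧ _ < N by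
        norm_num <;> omega
  set g : ZMod 2 × ZMod 2 → ZMod 2 × ZMod 2 :=
    fun v => c ((v.2.val : ℤ), (v.1.val : ℤ), 0) with hg
  have memS0 : ∀ v : ZMod 2 × ZMod 2, (((v.2.val : ℤ), (v.1.val : ℤ), (0:ℤ)) : ℤ × ℤ × ℤ) ∈
      ({((0:ℤ), (0:ℤ), (0:ℤ)), (0 + 1, 0, 0), (0, 0 + 1, 0), (0 + 1, 0 + 1, 0)} : Set (ℤ × ℤ × ℤ)) := by
    intro v
    have h2 : v.2.val < 2 := ZMod.val_lt v.2
    have h1 : v.1.val < 2 := ZMod.val_lt v.1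
    interval_cases h : v.2.val <;> interval_cases h' : v.1.val <;> simp_all
  have hginj : Function.Injective g := by
    intro v w h
    have := hS0 (memS0 v) (memS0 w) h
    have e1 : (v.2.val : ℤ) = (w.2.val : ℤ) := congrArg Prod.fst this
    have e2 : (v.1.val : ℤ) = (w.1.val : ℤ) := congrArg (fun q => q.2.1) this
    have v2 : v.2 = w.2 := ZMod.val_injective 2 (by exact_mod_cast e1)
    have v1 : v.1 = w.1 := ZMod.val_injective 2 (by exact_mod_cast e2)
    exact Prod.ext v1 v2
  refine ⟨Equiv.ofBijective g (Finite.injective_iff_bijective.mp hginj), ?_⟩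
  rintro ⟨x, y, z⟩ hp
  have hred := reduce L M N hL hM hN c hc _ x y z rfl hp
  have hv2 : ((((x + z : ℤ) : ZMod 2)).val : ℤ) = (x + z) % 2 := ZMod.val_intCast _
  have hv1 : ((((y + z : ℤ) : ZMod 2)).val : ℤ) = (y + z) % 2 := ZMod.val_intCast _
  show c (x, y, z) = g (slabColoring (x, y, z))
  rw [hred]
  simp only [hg, slabColoring]
  rw [hv1, hv2]
end

section
/- There exists a slab tiling of the 6×6×5 box that admits no flip: no two slabs of the tiling have union equal to a 2×2×2 block of cells. Consequently this tiling forms a flip connected component of size one. -/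
def slabPts : Fin 3 × ℤ × ℤ × ℤ → List (ℤ × ℤ × ℤ)
  | (0, x, y, z) => [(x, y, z), (x + 1, y, z), (x, y + 1, z), (x + 1, y + 1, z)]
  | (1, x, y, z) => [(x, y, z), (x + 1, y, z), (x, y, z + 1), (x + 1, y, z + 1)]
  | (2, x, y, z) => [(x, y, z), (x, y + 1, z), (x, y, z + 1), (x, y + 1, z + 1)]

def slabSet (d : Fin 3 × ℤ × ℤ × ℤ) : Set (ℤ × ℤ × ℤ) := {p | p ∈ slabPts d}

def tileData : List (Fin 3 × ℤ × ℤ × ℤ) :=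
  [ (1, 0, 0, 0), (1, 0, 0, 2), (0, 0, 0, 4), (2, 0, 1, 0), (2, 0, 1, 2),
    (0, 0, 2, 4), (2, 0, 3, 0), (2, 0, 3, 2), (0, 0, 4, 4), (1, 0, 5, 0),
    (1, 0, 5, 2), (0, 1, 1, 0), (2, 1, 1, 1), (0, 1, 1, 3), (0, 1, 3, 0),
    (2, 1, 3, 1), (0, 1, 3, 3), (1, 2, 0, 0), (0, 2, 0, 2), (1, 2, 0, 3),
    (0, 2, 1, 1), (0, 2, 1, 4), (0, 2, 2, 2), (0, 2, 3, 1), (0, 2, 3, 4),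
    (0, 2, 4, 2), (1, 2, 5, 0), (1, 2, 5, 3), (0, 3, 1, 0), (0, 3, 1, 3),
    (0, 3, 3, 0), (0, 3, 3, 3), (1, 4, 0, 0), (1, 4, 0, 2), (0, 4, 0, 4),
    (2, 4, 1, 1), (0, 4, 2, 4), (2, 4, 3, 1), (0, 4, 4, 4), (1, 4, 5, 0),
    (1, 4, 5, 2), (2, 5, 1, 0), (2, 5, 1, 2), (2, 5, 3, 0), (2, 5, 3, 2) ]

def boxList : List (ℤ × ℤ × ℤ) :=
  (List.range 6).flatMap fun x => (List.range 6).flatMap fun y =>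
    (List.range 5).flatMap fun z => [((x : ℤ), (y : ℤ), (z : ℤ))]

set_option maxRecDepth 100000 in
lemma P1 : ∀ d ∈ tileData, ∀ p ∈ slabPts d,
    0 ≤ p.1 ∧ p.1 < 6 ∧ 0 ≤ p.2.1 ∧ p.2.1 < 6 ∧ 0 ≤ p.2.2 ∧ p.2.2 < 5 := by decide

set_option maxRecDepth 100000 in
set_option maxHeartbeats 1000000 in
lemma P2 : ∀ p ∈ boxList, ∃ d ∈ tileData, p ∈ slabPts d := by decide

set_option maxRecDepth 1000000 in
set_option maxHeartbeats 2000000 in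
lemma P3 : ∀ d ∈ tileData, ∀ d' ∈ tileData, d ≠ d' →
    ∀ p ∈ slabPts d, p ∉ slabPts d' := by decide

set_option maxRecDepth 1000000 in
set_option maxHeartbeats 4000000 in
lemma P4 : ∀ d ∈ tileData, ∀ d' ∈ tileData, ∀ q ∈ slabPts d ++ slabPts d',
    ¬ ((q.1 + 1, q.2.1, q.2.2) ∈ slabPts d ++ slabPts d' ∧
       (q.1, q.2.1 + 1, q.2.2) ∈ slabPts d ++ slabPts d' ∧
       (q.1 + 1, q.2.1 + 1, q.2.2) ∈ slabPts d ++ slabPts d' ∧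
       (q.1, q.2.1, q.2.2 + 1) ∈ slabPts d ++ slabPts d' ∧
       (q.1 + 1, q.2.1, q.2.2 + 1) ∈ slabPts d ++ slabPts d' ∧
       (q.1, q.2.1 + 1, q.2.2 + 1) ∈ slabPts d ++ slabPts d' ∧
       (q.1 + 1, q.2.1 + 1, q.2.2 + 1) ∈ slabPts d ++ slabPts d') := by decide

lemma isSlab_slabSet : ∀ d, IsSlab (slabSet d) := by
  rintro ⟨o, x, y, z⟩
  fin_cases o
  · exact Or.inl ⟨x, y, z, by ext p; simp [slabSet, slabPts]⟩
  · exact Or.inr (Or.inl ⟨x, y, z, by ext p; simp [slabSet, slabPts]⟩)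
  · exact Or.inr (Or.inr ⟨x, y, z, by ext p; simp [slabSet, slabPts]⟩)

lemma mem_boxList {p : ℤ × ℤ × ℤ} (hp : p ∈ Box 6 6 5) : p ∈ boxList := by
  obtain ⟨x, y, z⟩ := p
  simp only [Box, Set.mem_setOf_eq] at hp
  obtain ⟨h1, h2, h3, h4, h5, h6⟩ := hp
  simp only [boxList, List.mem_flatMap, List.mem_range, List.mem_singleton,
    Prod.mk.injEq]
  refine ⟨x.toNat, ?_, y.toNat, ?_, z.toNat, ?_, ?_, ?_, ?_⟩ <;> simp
  · exact ⟨x.toNat, by omega, by omega⟩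
  · exact ⟨y.toNat, by omega, by omega⟩
  · exact ⟨z.toNat, by omega, by omega⟩
  all_goals omega

theorem box_665_rigid_tiling' :
    ∃ t : Set (Set (ℤ × ℤ × ℤ)), (((∀ S ∈ t, IsSlab S) ∧
      (∀ S ∈ t, ∀ S' ∈ t, S ≠ S' → Disjoint S S') ∧ ⋃₀ t = Box 6 6 5)) ∧
      (∀ P₁ ∈ t, ∀ P₂ ∈ t, ¬ IsBlock222 (P₁ ∪ P₂)) := by
  refine ⟨slabSet '' {d | d ∈ tileData}, ⟨?_, ?_, ?_⟩, ?_⟩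
  · rintro S ⟨d, _, rfl⟩; exact isSlab_slabSet d
  · rintro S ⟨d, hd, rfl⟩ S' ⟨d', hd', rfl⟩ hne
    have hdd : d ≠ d' := fun h => hne (by rw [h])
    rw [Set.disjoint_left]
    intro p hp
    exact P3 d hd d' hd' hdd p hp
  · ext p
    simp only [Set.mem_sUnion, Set.mem_image, Set.mem_setOf_eq]
    constructor
    · rintro ⟨S, ⟨d, hd, rfl⟩, hp⟩
      obtain ⟨h1, h2, h3, h4, h5, h6⟩ := P1 d hd p hp
      exact ⟨h1, h2, h3, h4, h5, h6⟩
    · intro hp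
      obtain ⟨d, hd, hpd⟩ := P2 p (mem_boxList hp)
      exact ⟨slabSet d, ⟨d, hd, rfl⟩, hpd⟩
  · rintro P₁ ⟨d, hd, rfl⟩ P₂ ⟨d', hd', rfl⟩ ⟨x, y, z, hB⟩
    have hmem : ∀ q : ℤ × ℤ × ℤ,
        q ∈ ({(x, y, z), (x + 1, y, z), (x, y + 1, z), (x + 1, y + 1, z),
          (x, y, z + 1), (x + 1, y, z + 1), (x, y + 1, z + 1), (x + 1, y + 1, z + 1)} :
          Set (ℤ × ℤ × ℤ)) → q ∈ slabPts d ++ slabPts d' := by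
      intro q hq
      have : q ∈ slabSet d ∪ slabSet d' := hB ▸ hq
      simpa [slabSet, List.mem_append] using this
    refine P4 d hd d' hd' (x, y, z) (hmem (x, y, z) (by simp)) ?_
    refine ⟨hmem _ ?_, hmem _ ?_, hmem _ ?_, hmem _ ?_, hmem _ ?_, hmem _ ?_, hmem _ ?_⟩ <;> simp


theorem box_665_rigid_tiling :
    ∃ t : Set (Set (ℤ × ℤ × ℤ)), IsSlabTiling (Box 6 6 5) t ∧
      (∀ P₁ ∈ t, ∀ P₂ ∈ t, ¬ IsBlock222 (P₁ ∪ P₂)) := by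
  exact box_665_rigid_tiling'
end

section
/- There exists a mixed tiling m of the 4×4×6 box that does not correspond to any slab tiling: there is no slab tiling t of the 4×4×6 box such that every horizontal slab of t is an element of m and every vertical slab of t is the union of two vertical dominoes of m. -/
/-- A horizontal slab. -/
def IsHorizSlab (S : Set (ℤ × ℤ × ℤ)) : Prop :=
  ∃ x y z : ℤ, S = {(x, y, z), (x + 1, y, z), (x, y + 1, z), (x + 1, y + 1, z)}

/-- A vertical slab. -/
def IsVertSlab (S : Set (ℤ × ℤ × ℤ)) : Prop :=
  (∃ x y z : ℤ, S = {(x, y, z), (x + 1, y, z), (x, y, z + 1), (x + 1, y, z + 1)}) ∨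
  (∃ x y z : ℤ, S = {(x, y, z), (x, y + 1, z), (x, y, z + 1), (x, y + 1, z + 1)})

/-- A vertical domino. -/
def IsVertDomino (S : Set (ℤ × ℤ × ℤ)) : Prop :=
  ∃ x y z : ℤ, S = {(x, y, z), (x, y, z + 1)}

/-- A mixed tiling: a partition into horizontal slabs and vertical dominoes. -/
def IsMixedTiling (R : Set (ℤ × ℤ × ℤ)) (m : Set (Set (ℤ × ℤ × ℤ))) : Prop :=
  (∀ S ∈ m, IsHorizSlab S ∨ IsVertDomino S) ∧
  (∀ S ∈ m, ∀ S' ∈ m, S ≠ S' → Disjoint S S') ∧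
  ⋃₀ m = R


/-! ### Auxiliary construction -/

abbrev Cell := ℤ × ℤ × ℤ

def hsF (x y z : ℤ) : Finset Cell := {(x,y,z),(x+1,y,z),(x,y+1,z),(x+1,y+1,z)}
def vdF (x y z : ℤ) : Finset Cell := {(x,y,z),(x,y,z+1)}

def hsA : List Cell := [(1,0,0),(1,2,0),(1,1,1),(0,1,2),(0,1,3),(1,1,4),(1,0,5),(1,2,5)]
def vdA : List Cell :=
  [(0,0,0),(0,0,2),(0,0,4),(0,3,0),(0,3,2),(0,3,4),
   (3,0,0),(3,0,2),(3,0,4),(3,1,0),(3,1,2),(3,1,4),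
   (3,2,0),(3,2,2),(3,2,4),(3,3,0),(3,3,2),(3,3,4),
   (0,1,0),(0,1,4),(0,2,0),(0,2,4),
   (1,0,1),(1,0,3),(1,3,1),(1,3,3),(2,0,1),(2,0,3),(2,3,1),(2,3,3),
   (2,1,2),(2,2,2)]

def mList : List (Finset Cell) :=
  hsA.map (fun p => hsF p.1 p.2.1 p.2.2) ++ vdA.map (fun p => vdF p.1 p.2.1 p.2.2)

def mSet : Set (Set Cell) := {S | ∃ F ∈ mList, S = ↑F}

lemma hsF_coe (x y z : ℤ) :
    (↑(hsF x y z) : Set Cell) = {(x,y,z),(x+1,y,z),(x,y+1,z),(x+1,y+1,z)} := by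
  simp [hsF]

lemma vdF_coe (x y z : ℤ) :
    (↑(vdF x y z) : Set Cell) = {(x,y,z),(x,y,z+1)} := by
  simp [vdF]

lemma uniq : ∀ F ∈ mList, ∀ F' ∈ mList, ∀ p : Cell, p ∈ F → p ∈ F' → F = F' := by decide

lemma inBoxL : ∀ F ∈ mList, ∀ p ∈ F,
    0 ≤ p.1 ∧ p.1 < 4 ∧ 0 ≤ p.2.1 ∧ p.2.1 < 4 ∧ 0 ≤ p.2.2 ∧ p.2.2 < 6 := by decide

lemma cover : ∀ x y z : ℤ, 0 ≤ x → x < 4 → 0 ≤ y → y < 4 → 0 ≤ z → z < 6 →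
    ∃ F ∈ mList, ((x,y,z) : Cell) ∈ F := by
  intro x y z hx0 hx hy0 hy hz0 hz
  interval_cases x <;> interval_cases y <;> interval_cases z <;> decide

lemma m_unique {S : Set Cell} (hS : S ∈ mSet) {p : Cell} (hp : p ∈ S)
    {F : Finset Cell} (hF : F ∈ mList) (hpF : p ∈ F) : S = ↑F := by
  obtain ⟨G, hG, rfl⟩ := hS
  rw [uniq G hG F hF p (by exact_mod_cast hp) hpF]


theorem mixed_tiling_not_from_slab_tiling :
    ∃ m : Set (Set (ℤ × ℤ × ℤ)), IsMixedTiling (Box 4 4 6) m ∧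
      ¬ ∃ t : Set (Set (ℤ × ℤ × ℤ)), IsSlabTiling (Box 4 4 6) t ∧
        (∀ S ∈ t, IsHorizSlab S → S ∈ m) ∧
        (∀ S ∈ t, IsVertSlab S →
          ∃ d₁ ∈ m, ∃ d₂ ∈ m, IsVertDomino d₁ ∧ IsVertDomino d₂ ∧ S = d₁ ∪ d₂) := by
  refine ⟨mSet, ⟨?_, ?_, ?_⟩, ?_⟩
  · rintro S ⟨F, hF, rfl⟩
    rcases List.mem_append.1 hF with h | h <;> obtain ⟨p, -, rfl⟩ := List.mem_map.1 h
    · exact Or.inl ⟨p.1, p.2.1, p.2.2, hsF_coe _ _ _⟩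
    · exact Or.inr ⟨p.1, p.2.1, p.2.2, vdF_coe _ _ _⟩
  · rintro S ⟨F, hF, rfl⟩ S' ⟨F', hF', rfl⟩ hne
    rw [Set.disjoint_left]
    intro p hp hp'
    exact hne (by rw [uniq F hF F' hF' p (by exact_mod_cast hp) (by exact_mod_cast hp')])
  · ext ⟨x, y, z⟩
    simp only [Box, Set.mem_setOf_eq]
    constructor
    · rintro ⟨S, ⟨F, hF, rfl⟩, hp⟩
      exact inBoxL F hF _ (by exact_mod_cast hp)
    · rintro ⟨h1, h2, h3, h4, h5, h6⟩
      obtain ⟨F, hF, hpF⟩ := cover x y z h1 h2 h3 h4 h5 h6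
      exact ⟨↑F, ⟨F, hF, rfl⟩, by exact_mod_cast hpF⟩
  · rintro ⟨t, ⟨hts, htd, htu⟩, hH, hV⟩
    have hbox : ((0:ℤ),(0:ℤ),(2:ℤ)) ∈ Box 4 4 6 := by
      simp [Box]
    rw [← htu] at hbox
    obtain ⟨P, hPt, hc0⟩ := hbox
    have hPbox : ∀ q ∈ P, q ∈ Box 4 4 6 := fun q hq => htu ▸ ⟨P, hPt, hq⟩
    rcases hts P hPt with ⟨x, y, z, hPeq⟩ | ⟨x, y, z, hPeq⟩ | ⟨x, y, z, hPeq⟩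
    · -- horizontal slab containing (0,0,2): must be in m, but m's piece there is a domino
      have hPm : P ∈ mSet := hH P hPt ⟨x, y, z, hPeq⟩
      have hP2 : P = ↑(vdF 0 0 2) :=
        m_unique hPm hc0 (by decide : vdF 0 0 2 ∈ mList) (by decide)
      have h1 : ((x,y,z) : Cell) ∈ P := by rw [hPeq]; simp
      have h2 : ((x+1,y,z) : Cell) ∈ P := by rw [hPeq]; simp
      rw [hP2] at h1 h2
      simp only [vdF, Finset.coe_insert, Finset.coe_singleton, Set.mem_insert_iff,
        Set.mem_singleton_iff, Prod.mk.injEq] at h1 h2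
      omega
    · -- vertical slab in the x-direction
      obtain ⟨d1, hd1m, d2, hd2m, hd1, hd2, hPu⟩ := hV P hPt (Or.inl ⟨x, y, z, hPeq⟩)
      have main : ∀ (w u : Cell) (F : Finset Cell), F ∈ mList → w ∈ F → u ∈ F →
          w ∈ P → u ∉ P → False := by
        intro w u F hF hwF huF hwP huP
        rw [hPu] at hwP
        rcases hwP with hw | hw
        · have hd : d1 = ↑F := m_unique hd1m hw hF hwF
          exact huP (by rw [hPu]; exact Set.mem_union_left _ (by rw [hd]; exact_mod_cast huF))
        · have hd : d2 = ↑F := m_unique hd2m hw hF hwF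
          exact huP (by rw [hPu]; exact Set.mem_union_right _ (by rw [hd]; exact_mod_cast huF))
      rw [hPeq] at hc0
      simp only [Set.mem_insert_iff, Set.mem_singleton_iff, Prod.mk.injEq] at hc0
      rcases hc0 with ⟨hx, hy, hz⟩ | ⟨hx, hy, hz⟩ | ⟨hx, hy, hz⟩ | ⟨hx, hy, hz⟩
      · -- P = {(0,0,2),(1,0,2),(0,0,3),(1,0,3)}
        exact main (1,0,2) (1,0,1) (vdF 1 0 1) (by decide) (by decide) (by decide)
          (by rw [hPeq]; simp only [Set.mem_insert_iff, Set.mem_singleton_iff,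
                Prod.mk.injEq]; omega)
          (by rw [hPeq]; simp only [Set.mem_insert_iff, Set.mem_singleton_iff,
                Prod.mk.injEq]; omega)
      · -- x = -1 : out of the box
        have hm : ((x,y,z) : Cell) ∈ P := by rw [hPeq]; simp
        have hb := hPbox _ hm
        simp only [Box, Set.mem_setOf_eq] at hb
        omega
      · -- P = {(0,0,1),(1,0,1),(0,0,2),(1,0,2)}
        exact main (0,0,1) (0,0,0) (vdF 0 0 0) (by decide) (by decide) (by decide)
          (by rw [hPeq]; simp only [Set.mem_insert_iff, Set.mem_singleton_iff,
                Prod.mk.injEq]; omega)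
          (by rw [hPeq]; simp only [Set.mem_insert_iff, Set.mem_singleton_iff,
                Prod.mk.injEq]; omega)
      · -- x = -1 : out of the box
        have hm : ((x,y,z) : Cell) ∈ P := by rw [hPeq]; simp
        have hb := hPbox _ hm
        simp only [Box, Set.mem_setOf_eq] at hb
        omega
    · -- vertical slab in the y-direction
      obtain ⟨d1, hd1m, d2, hd2m, hd1, hd2, hPu⟩ := hV P hPt (Or.inr ⟨x, y, z, hPeq⟩)
      have main : ∀ (w u : Cell) (F : Finset Cell), F ∈ mList → w ∈ F → u ∈ F →
          w ∈ P → u ∉ P → False := by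
        intro w u F hF hwF huF hwP huP
        rw [hPu] at hwP
        rcases hwP with hw | hw
        · have hd : d1 = ↑F := m_unique hd1m hw hF hwF
          exact huP (by rw [hPu]; exact Set.mem_union_left _ (by rw [hd]; exact_mod_cast huF))
        · have hd : d2 = ↑F := m_unique hd2m hw hF hwF
          exact huP (by rw [hPu]; exact Set.mem_union_right _ (by rw [hd]; exact_mod_cast huF))
      rw [hPeq] at hc0
      simp only [Set.mem_insert_iff, Set.mem_singleton_iff, Prod.mk.injEq] at hc0
      rcases hc0 with ⟨hx, hy, hz⟩ | ⟨hx, hy, hz⟩ | ⟨hx, hy, hz⟩ | ⟨hx, hy, hz⟩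
      · -- P = {(0,0,2),(0,1,2),(0,0,3),(0,1,3)} ; (0,1,2) lies in a horizontal slab of m
        exact main (0,1,2) (1,1,2) (hsF 0 1 2) (by decide) (by decide) (by decide)
          (by rw [hPeq]; simp only [Set.mem_insert_iff, Set.mem_singleton_iff,
                Prod.mk.injEq]; omega)
          (by rw [hPeq]; simp only [Set.mem_insert_iff, Set.mem_singleton_iff,
                Prod.mk.injEq]; omega)
      · -- y = -1 : out of the box
        have hm : ((x,y,z) : Cell) ∈ P := by rw [hPeq]; simp
        have hb := hPbox _ hm
        simp only [Box, Set.mem_setOf_eq] at hb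
        omega
      · -- P = {(0,0,1),(0,1,1),(0,0,2),(0,1,2)}
        exact main (0,0,1) (0,0,0) (vdF 0 0 0) (by decide) (by decide) (by decide)
          (by rw [hPeq]; simp only [Set.mem_insert_iff, Set.mem_singleton_iff,
                Prod.mk.injEq]; omega)
          (by rw [hPeq]; simp only [Set.mem_insert_iff, Set.mem_singleton_iff,
                Prod.mk.injEq]; omega)
      · -- y = -1 : out of the box
        have hm : ((x,y,z) : Cell) ∈ P := by rw [hPeq]; simp
        have hb := hPbox _ hm
        simp only [Box, Set.mem_setOf_eq] at hb
        omega
end
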